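/- If nonnegative random variables r^C and r^D satisfy Pr{r^D > η·r^C} > 1 - r_th²/E[(r^C)²] (with E[(r^C)²] > 0 and r_th > 0), then E[r^C · 1(η·r^C ≥ r^D)] < r_th. -/

import Mathlib

open MeasureTheory

/-- If `Pr{r^D > η r^C} > 1 - r_th² / E[(r^C)²]`, then `E[r^C · 1(η r^C ≥ r^D)] < r_th`. -/
theorem stmt1 {Ω : Type*} [MeasurableSpace Ω] (μ : Measure Ω) [IsProbabilityMeasure μ]
    (rC rD : Ω → ℝ) (hC : ∀ ω, 0 ≤ rC ω) (hD : ∀ ω, 0 ≤ rD ω)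
    (hL2 : MemLp rC 2 μ) (η rth : ℝ) (hη : 0 ≤ η) (hrth : 0 < rth)
    (hpos : 0 < ∫ ω, (rC ω) ^ 2 ∂μ)
    (hprob : 1 - rth ^ 2 / ∫ ω, (rC ω) ^ 2 ∂μ < (μ {ω | η * rC ω < rD ω}).toReal) :
    ∫ ω, ({ω | rD ω ≤ η * rC ω}.indicator rC) ω ∂μ < rth := by
  set A := {ω | rD ω ≤ η * rC ω} with hAdef
  set f := A.indicator rC with hfdef
  by_cases hf : Integrable f μ
  swap
  · rw [integral_undef hf]; exact hrth
  set E2 := ∫ ω, (rC ω) ^ 2 ∂μ with hE2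
  have hfnn : ∀ ω, 0 ≤ f ω := fun ω => Set.indicator_nonneg (fun x _ => hC x) ω
  have hfle : ∀ ω, f ω ≤ rC ω := fun ω => Set.indicator_le_self' (fun x _ => hC x) ω
  obtain ⟨g, hgmeas, hfg⟩ := hf.1
  have hgnn : ∀ᵐ ω ∂μ, 0 ≤ g ω := by
    filter_upwards [hfg] with ω hω; rw [← hω]; exact hfnn ω
  have hgle : ∀ᵐ ω ∂μ, g ω ≤ rC ω := by
    filter_upwards [hfg] with ω hω; rw [← hω]; exact hfle ω
  set N := toMeasurable μ {x | f x ≠ g x} with hNdef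
  have hNnull : μ N = 0 := by
    rw [measure_toMeasurable]; exact ae_iff.mp hfg
  set T := {x | g x = 0} with hTdef
  have hTmeas : MeasurableSet T := hgmeas.measurableSet_eq_fun stronglyMeasurable_const
  have hsub : {ω | η * rC ω < rD ω} ⊆ T ∪ N := by
    intro ω hω
    by_cases hωN : ω ∈ N
    · exact Or.inr hωN
    left
    have hωA : ω ∉ A := by
      simp only [hAdef, Set.mem_setOf_eq, not_le]
      exact hω
    have h1 : f ω = 0 := Set.indicator_of_notMem hωA rC
    have h2 : f ω = g ω := by
      by_contra hne
      exact hωN (subset_toMeasurable _ _ hne)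
    simpa [hTdef, ← h2] using h1
  have hμT : 1 - rth ^ 2 / E2 < (μ T).toReal := by
    refine lt_of_lt_of_le hprob (ENNReal.toReal_mono (measure_ne_top μ T) ?_)
    calc μ {ω | η * rC ω < rD ω} ≤ μ (T ∪ N) := measure_mono hsub
      _ ≤ μ T + μ N := measure_union_le _ _
      _ = μ T := by rw [hNnull, add_zero]
  set S := {x | g x ≠ 0} with hSdef
  have hSmeas : MeasurableSet S := hTmeas.compl
  have hμS : (μ S).toReal < rth ^ 2 / E2 := by
    have hadd : (μ T).toReal + (μ S).toReal = 1 := by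
      have h1 : μ T + μ S = 1 := by
        have := measure_add_measure_compl (μ := μ) hTmeas
        simpa [hSdef, hTdef, Set.compl_setOf] using this
      have := congrArg ENNReal.toReal h1
      rwa [ENNReal.toReal_add (measure_ne_top μ T) (measure_ne_top μ S),
        ENNReal.toReal_one] at this
    linarith
  -- Cauchy–Schwarz
  have hconj : (2 : ℝ).HolderConjugate 2 := by
    rw [Real.holderConjugate_iff] <;> norm_num
  set ind : Ω → ℝ := S.indicator (fun _ => (1 : ℝ)) with hinddef
  have hindL2 : MemLp ind (ENNReal.ofReal 2) μ := by
    have := memLp_indicator_const (2 : ENNReal) hSmeas (1 : ℝ) (Or.inr (measure_ne_top μ S))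
    convert this using 2
    norm_num
  have hgL2 : MemLp g 2 μ := by
    refine hL2.of_le hgmeas.aestronglyMeasurable ?_
    filter_upwards [hgnn, hgle] with ω h1 h2
    rw [Real.norm_of_nonneg h1, Real.norm_of_nonneg (hC ω)]
    exact h2
  have hgL2' : MemLp g (ENNReal.ofReal 2) μ := by
    convert hgL2 using 2; norm_num
  have hindnn : 0 ≤ᵐ[μ] ind := Filter.Eventually.of_forall fun ω =>
    Set.indicator_nonneg (fun _ _ => zero_le_one) ω
  have hCS := integral_mul_le_Lp_mul_Lq_of_nonneg hconj hindnn hgnn hindL2 hgL2'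
  have hleft : ∫ ω, ind ω * g ω ∂μ = ∫ ω, g ω ∂μ := by
    congr 1 with ω
    by_cases h : ω ∈ S
    · simp [hinddef, Set.indicator_of_mem h]
    · have : g ω = 0 := by simpa [hSdef] using h
      simp [this]
  have hind2 : ∫ ω, ind ω ^ (2:ℝ) ∂μ = (μ S).toReal := by
    have h1 : ∀ ω, ind ω ^ (2:ℝ) = ind ω := by
      intro ω
      by_cases h : ω ∈ S
      · simp [hinddef, Set.indicator_of_mem h]
      · simp [hinddef, Set.indicator_of_notMem h, Real.zero_rpow]
    simp_rw [h1]
    rw [hinddef, integral_indicator_const _ hSmeas]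
    simp [Measure.real]
  have hg2int : Integrable (fun ω => g ω ^ 2) μ := hgL2.integrable_sq
  have hrC2int : Integrable (fun ω => rC ω ^ 2) μ := hL2.integrable_sq
  have hg2le : ∫ ω, g ω ^ 2 ∂μ ≤ E2 := by
    refine integral_mono_ae hg2int hrC2int ?_
    filter_upwards [hgnn, hgle] with ω h1 h2
    exact pow_le_pow_left₀ h1 h2 2
  have hg2nn : 0 ≤ ∫ ω, g ω ^ 2 ∂μ := integral_nonneg fun ω => sq_nonneg _
  have hgrpow : ∫ ω, g ω ^ (2:ℝ) ∂μ = ∫ ω, g ω ^ 2 ∂μ := by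
    congr 1 with ω
    rw [show (2:ℝ) = ((2:ℕ):ℝ) by norm_num, Real.rpow_natCast]
  rw [hleft, hind2, hgrpow] at hCS
  have hEq : ∫ ω, f ω ∂μ = ∫ ω, g ω ∂μ := integral_congr_ae hfg
  rw [hEq]
  refine lt_of_le_of_lt hCS ?_
  -- numeric: a^(1/2) * b^(1/2) < rth
  set a := (μ S).toReal with hadef
  set b := ∫ ω, g ω ^ 2 ∂μ with hbdef
  have hann : 0 ≤ a := ENNReal.toReal_nonneg
  have hab : a * b < rth ^ 2 := by
    calc a * b ≤ a * E2 := by nlinarith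
      _ < rth ^ 2 / E2 * E2 := by
          exact mul_lt_mul_of_pos_right hμS hpos
      _ = rth ^ 2 := div_mul_cancel₀ _ (ne_of_gt hpos)
  calc a ^ (1/(2:ℝ)) * b ^ (1/(2:ℝ)) = (a * b) ^ (1/(2:ℝ)) := by
        rw [Real.mul_rpow hann hg2nn]
    _ < (rth ^ 2) ^ (1/(2:ℝ)) := by
        apply Real.rpow_lt_rpow (by positivity) hab (by norm_num)
    _ = rth := by
        rw [show rth ^ 2 = rth ^ ((2:ℕ):ℝ) by rw [Real.rpow_natCast],
          ← Real.rpow_mul hrth.le]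
        norm_num
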